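/- Let H be a real Hilbert space, let A, B : H → Set H be maximally monotone operators, let γ > 0, β ∈ (0,1), let (λ_n) be a sequence in [0,1] with ∑ λ_n(1−λ_n) = ∞, and suppose q ∈ ran(Id + (γ/(2(1−β)))(A + B)). Given x_0 ∈ H, define x_{n+1} = (1−λ_n) x_n + λ_n (2β J_{γB_{−q}} − Id)((2β J_{γA_{−q}} − Id)(x_n)). Then there exists x* ∈ H which is a fixed point of the map T = (2β J_{γB_{−q}} − Id) ∘ (2β J_{γA_{−q}} − Id) such that (x_n) converges weakly to x* (i.e. ⟨x_n, z⟩ → ⟨x*, z⟩ for every z ∈ H) and J_{γA}(q + x*) = J_{(γ/(2(1−β)))(A+B)}(q). -/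

import Mathlib

open Pointwise RealInnerProductSpace Filter

/-- A set-valued operator `A : H → Set H` is monotone if
`⟪x − y, u − v⟫ ≥ 0` for all `(x,u), (y,v)` in its graph. -/
def MonotoneOp {H : Type*} [NormedAddCommGroup H] [InnerProductSpace ℝ H]
    (A : H → Set H) : Prop :=
  ∀ x y u v : H, u ∈ A x → v ∈ A y → 0 ≤ ⟪x - y, u - v⟫

/-- A set-valued operator is maximally monotone if it is monotone and `(x,u)` belongs
to its graph whenever `⟪x − y, u − v⟫ ≥ 0` for all `(y,v)` in its graph. -/
def MaxMonotoneOp {H : Type*} [NormedAddCommGroup H] [InnerProductSpace ℝ H]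
    (A : H → Set H) : Prop :=
  MonotoneOp A ∧ ∀ x u : H, (∀ y v : H, v ∈ A y → 0 ≤ ⟪x - y, u - v⟫) → u ∈ A x

/-- The range of `Id + A`: `ran(Id + A) = {x + u | x ∈ H, u ∈ A x}`. -/
def ranIdAdd {H : Type*} [NormedAddCommGroup H] [InnerProductSpace ℝ H]
    (A : H → Set H) : Set H :=
  {y | ∃ x : H, ∃ u ∈ A x, y = x + u}

section Aux
variable {H : Type*} [NormedAddCommGroup H] [InnerProductSpace ℝ H]

lemma le_of_sq_le_sq' {a b : ℝ} (ha : 0 ≤ a) (hb : 0 ≤ b) (h : a ^ 2 ≤ b ^ 2) : a ≤ b := by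
  nlinarith

/-- uniqueness of the resolvent point -/
lemma resolvent_unique {A : H → Set H} (hA : MonotoneOp A) {γ : ℝ} (hγ : 0 < γ) {q s u v : H}
    (hu : s - u ∈ γ • A (u + q)) (hv : s - v ∈ γ • A (v + q)) : u = v := by
  obtain ⟨a, ha, hae⟩ := Set.mem_smul_set.mp hu
  obtain ⟨b, hb, hbe⟩ := Set.mem_smul_set.mp hv
  have h := hA (u + q) (v + q) a b ha hb
  have h1 : (u + q) - (v + q) = u - v := by abel
  rw [h1] at h
  have h2 : γ • a - γ • b = v - u := by rw [hae, hbe]; abel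
  have h3 : (0:ℝ) ≤ ⟪u - v, γ • a - γ • b⟫ := by
    rw [← smul_sub, real_inner_smul_right]
    exact mul_nonneg hγ.le h
  rw [h2] at h3
  have h4 : ⟪u - v, v - u⟫ = -‖u - v‖ ^ 2 := by
    rw [show v - u = -(u - v) by abel, inner_neg_right, real_inner_self_eq_norm_sq]
  rw [h4] at h3
  have : ‖u - v‖ ^ 2 ≤ 0 := by linarith
  have : ‖u - v‖ = 0 := by nlinarith [sq_nonneg ‖u - v‖, norm_nonneg (u - v)]
  exact sub_eq_zero.mp (norm_eq_zero.mp this)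

/-- firm nonexpansiveness of the resolvent -/
lemma resolvent_firm {A : H → Set H} (hA : MonotoneOp A) {γ : ℝ} (hγ : 0 < γ) {q : H}
    {J : H → H} (hJ : ∀ s : H, s - J s ∈ γ • A (J s + q)) (s t : H) :
    0 ≤ ⟪J s - J t, (s - J s) - (t - J t)⟫ := by
  obtain ⟨a, ha, hae⟩ := Set.mem_smul_set.mp (hJ s)
  obtain ⟨b, hb, hbe⟩ := Set.mem_smul_set.mp (hJ t)
  have h := hA (J s + q) (J t + q) a b ha hb
  have h1 : (J s + q) - (J t + q) = J s - J t := by abel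
  rw [h1] at h
  have h2 : (s - J s) - (t - J t) = γ • (a - b) := by rw [smul_sub, hae, hbe]
  rw [h2, real_inner_smul_right]
  exact mul_nonneg hγ.le h

/-- nonexpansiveness of `2β•J − Id` for firmly nonexpansive `J`, `β ∈ (0,1]` -/
lemma refl_nonexp {β : ℝ} (hβ0 : 0 < β) (hβ1 : β ≤ 1) {J : H → H}
    (hJ : ∀ s t : H, 0 ≤ ⟪J s - J t, (s - J s) - (t - J t)⟫) (s t : H) :
    ‖((2 * β) • J s - s) - ((2 * β) • J t - t)‖ ≤ ‖s - t‖ := by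
  set d := J s - J t with hd
  set e := s - t with he
  have hvec : ((2 * β) • J s - s) - ((2 * β) • J t - t) = (2 * β) • d - e := by
    rw [hd, he, smul_sub]; abel
  rw [hvec]
  have hfirm : ⟪d, d⟫ ≤ ⟪d, e⟫ := by
    have h := hJ s t
    have hdd : (s - J s) - (t - J t) = e - d := by rw [hd, he]; abel
    rw [hdd, inner_sub_right] at h
    linarith
  refine le_of_sq_le_sq' (norm_nonneg _) (norm_nonneg _) ?_
  rw [norm_sub_sq_real, norm_smul, real_inner_smul_left]
  have hde : ⟪d, d⟫ = ‖d‖ ^ 2 := real_inner_self_eq_norm_sq d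
  have habs : ‖(2 * β : ℝ)‖ = 2 * β := by
    rw [Real.norm_eq_abs]; exact abs_of_pos (by linarith)
  rw [habs]
  have h5 : 4 * β * ‖d‖ ^ 2 ≤ 4 * β * ⟪d, e⟫ := by
    have := mul_le_mul_of_nonneg_left hfirm (by linarith : (0:ℝ) ≤ 4 * β)
    rw [hde] at this; linarith
  have h6 : (2 * β) ^ 2 * ‖d‖ ^ 2 ≤ 4 * β * ‖d‖ ^ 2 := by
    have hbq : (2 * β) ^ 2 ≤ 4 * β := by nlinarith
    exact mul_le_mul_of_nonneg_right hbq (sq_nonneg _)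
  have h7 : (2 * β * ‖d‖) ^ 2 = (2 * β) ^ 2 * ‖d‖ ^ 2 := by ring
  rw [h7]
  linarith

/-- norm identity for convex combinations -/
lemma norm_combo (lam : ℝ) (a b : H) :
    ‖(1 - lam) • a + lam • b‖ ^ 2
      = (1 - lam) * ‖a‖ ^ 2 + lam * ‖b‖ ^ 2 - lam * (1 - lam) * ‖a - b‖ ^ 2 := by
  rw [norm_add_sq_real, norm_smul, norm_smul, real_inner_smul_left,
    real_inner_smul_right]
  have h1 : (‖(1 - lam : ℝ)‖ * ‖a‖) ^ 2 = (1 - lam) ^ 2 * ‖a‖ ^ 2 := by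
    rw [mul_pow, Real.norm_eq_abs, sq_abs]
  have h2 : (‖(lam : ℝ)‖ * ‖b‖) ^ 2 = lam ^ 2 * ‖b‖ ^ 2 := by
    rw [mul_pow, Real.norm_eq_abs, sq_abs]
  rw [h1, h2, norm_sub_sq_real]
  have hab : ⟪a, b⟫ = (‖a‖ ^ 2 + ‖b‖ ^ 2 - (‖a‖ ^ 2 - 2 * ⟪a, b⟫ + ‖b‖ ^ 2)) / 2 := by
    ring
  nlinarith [hab]

end Aux

lemma weak_seq_compact {H : Type*} [NormedAddCommGroup H] [InnerProductSpace ℝ H]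
    [CompleteSpace H] (x : ℕ → H) (C : ℝ) (hC : ∀ n, ‖x n‖ ≤ C) :
    ∃ (w : H) (φ : ℕ → ℕ), StrictMono φ ∧
      ∀ z : H, Tendsto (fun k => ⟪x (φ k), z⟫) atTop (nhds ⟪w, z⟫) := by
  have hC0 : 0 ≤ C := le_trans (norm_nonneg _) (hC 0)
  -- Step 1: diagonal subsequence via compactness of [ -C², C² ]^ℕ
  set F : ℕ → (ℕ → ℝ) := fun n m => ⟪x n, x m⟫ with hF
  have hFmem : ∀ n, F n ∈ Set.univ.pi (fun _ : ℕ => Set.Icc (-(C*C)) (C*C)) := by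
    intro n m _
    have := abs_real_inner_le_norm (x n) (x m)
    have h2 : |⟪x n, x m⟫| ≤ C * C := le_trans this (by
      have := mul_le_mul (hC n) (hC m) (norm_nonneg _) hC0
      linarith)
    constructor
    · linarith [abs_le.mp h2]
    · linarith [abs_le.mp h2]
  obtain ⟨g, -, φ, hφ, hg⟩ := (isCompact_univ_pi (fun _ : ℕ => isCompact_Icc)).tendsto_subseq hFmem
  rw [tendsto_pi_nhds] at hg
  -- hg : ∀ m, Tendsto (fun k => ⟪x (φ k), x m⟫) atTop (𝓝 (g m))
  -- Step 2: the set of z for which the sequence is Cauchy is a closed submodule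
  set D : Set H := {z : H | ∃ L : ℝ, Tendsto (fun k => ⟪x (φ k), z⟫) atTop (nhds L)} with hD
  have hDrange : ∀ n, x n ∈ D := fun n => ⟨g n, hg n⟩
  have hDadd : ∀ y z, y ∈ D → z ∈ D → y + z ∈ D := by
    rintro y z ⟨Ly, hy⟩ ⟨Lz, hz⟩
    exact ⟨Ly + Lz, by simpa [inner_add_right] using hy.add hz⟩
  have hDsmul : ∀ (c : ℝ) z, z ∈ D → c • z ∈ D := by
    rintro c z ⟨L, hz⟩
    exact ⟨c * L, by simpa [inner_smul_right] using hz.const_mul c⟩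
  have hDspan : (Submodule.span ℝ (Set.range x) : Set H) ⊆ D := by
    intro z hz
    refine Submodule.span_induction (fun a ha => ?_) ⟨0, by simp⟩
      (fun a b _ _ ha hb => hDadd a b ha hb)
      (fun c a _ ha => hDsmul c a ha) hz
    obtain ⟨n, rfl⟩ := ha; exact hDrange n
  have hDclosed : ∀ z ∈ closure (Submodule.span ℝ (Set.range x) : Set H), z ∈ D := by
    intro z hz
    -- Cauchy criterion
    have hcauchy : CauchySeq (fun k => ⟪x (φ k), z⟫) := by
      rw [Metric.cauchySeq_iff]
      intro ε hε
      obtain ⟨y, hy, hyz⟩ := Metric.mem_closure_iff.mp hz (ε / (4 * C + 4) * 1) (by positivity)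
      obtain ⟨L, hL⟩ := hDspan hy
      have hcy : CauchySeq (fun k => ⟪x (φ k), y⟫) := hL.cauchySeq
      rw [Metric.cauchySeq_iff] at hcy
      obtain ⟨N, hN⟩ := hcy (ε / 2) (by positivity)
      refine ⟨N, fun m hm n hn => ?_⟩
      have key : ∀ j, |⟪x (φ j), z⟫ - ⟪x (φ j), y⟫| ≤ C * (ε / (4 * C + 4)) := by
        intro j
        rw [← inner_sub_right]
        refine le_trans (abs_real_inner_le_norm _ _) ?_
        have h1 : ‖z - y‖ ≤ ε / (4 * C + 4) := by
          rw [← dist_eq_norm]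
          simpa using hyz.le
        exact mul_le_mul (hC _) h1 (norm_nonneg _) hC0
      have h2 := hN m hm n hn
      rw [Real.dist_eq] at h2 ⊢
      have hCε : C * (ε / (4 * C + 4)) ≤ ε / 4 := by
        rw [mul_div_assoc', div_le_div_iff₀ (by positivity) (by norm_num)]
        nlinarith
      calc |⟪x (φ m), z⟫ - ⟪x (φ n), z⟫|
          ≤ |⟪x (φ m), z⟫ - ⟪x (φ m), y⟫| + |⟪x (φ m), y⟫ - ⟪x (φ n), y⟫|
            + |⟪x (φ n), y⟫ - ⟪x (φ n), z⟫| := by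
              have := abs_sub_le (⟪x (φ m), z⟫) (⟪x (φ m), y⟫) (⟪x (φ n), z⟫)
              have := abs_sub_le (⟪x (φ m), y⟫) (⟪x (φ n), y⟫) (⟪x (φ n), z⟫)
              linarith [abs_sub_le (⟪x (φ m), z⟫) (⟪x (φ m), y⟫) (⟪x (φ n), z⟫),
                abs_sub_le (⟪x (φ m), y⟫) (⟪x (φ n), y⟫) (⟪x (φ n), z⟫)]
        _ < ε := by
              have k1 := key m; have k2 := key n
              rw [abs_sub_comm (⟪x (φ n), y⟫)] at *
              linarith
    obtain ⟨L, hL⟩ := cauchySeq_tendsto_of_complete hcauchy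
    exact ⟨L, hL⟩
  -- Step 3: every z has a limit, via orthogonal projection onto the closure of the span
  set K : Submodule ℝ H := (Submodule.span ℝ (Set.range x)).topologicalClosure with hK
  have hKD : ∀ z : H, ∃ L : ℝ, Tendsto (fun k => ⟪x (φ k), z⟫) atTop (nhds L) := by
    intro z
    have hxK : ∀ n, x n ∈ K := fun n =>
      Submodule.le_topologicalClosure _ (Submodule.subset_span ⟨n, rfl⟩)
    have : K.HasOrthogonalProjection := letI : CompleteSpace K := (Submodule.span ℝ (Set.range x)).isClosed_topologicalClosure.completeSpace_coe
      inferInstance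
    set zK : H := (K.orthogonalProjectionOnto z : H)
    have hsplit : ∀ n, ⟪x n, z⟫ = ⟪x n, zK⟫ := by
      intro n
      have horth : z - zK ∈ Kᗮ := K.sub_starProjection_mem_orthogonal z
      have : ⟪x n, z - zK⟫ = 0 := horth (x n) (hxK n)
      rw [inner_sub_right] at this; linarith
    obtain ⟨L, hL⟩ := hDclosed zK (K.orthogonalProjectionOnto z).2
    exact ⟨L, by simpa only [hsplit] using hL⟩
  -- Step 4: build the weak limit via Riesz representation
  choose f hf using hKD
  have hfadd : ∀ y z, f (y + z) = f y + f z := by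
    intro y z
    have := (hf y).add (hf z)
    refine tendsto_nhds_unique ?_ this
    simpa [inner_add_right] using hf (y + z)
  have hfsmul : ∀ (c : ℝ) z, f (c • z) = c * f z := by
    intro c z
    have := (hf z).const_mul c
    refine tendsto_nhds_unique ?_ this
    simpa [inner_smul_right] using hf (c • z)
  have hfbound : ∀ z, |f z| ≤ C * ‖z‖ := by
    intro z
    have h1 : Tendsto (fun k => |⟪x (φ k), z⟫|) atTop (nhds |f z|) := (hf z).abs
    refine le_of_tendsto h1 (Eventually.of_forall fun k => ?_)
    exact le_trans (abs_real_inner_le_norm _ _) (mul_le_mul_of_nonneg_right (hC _) (norm_nonneg _))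
  set flin : H →ₗ[ℝ] ℝ := { toFun := f, map_add' := hfadd, map_smul' := hfsmul }
  set fc : H →L[ℝ] ℝ := LinearMap.mkContinuous flin C (fun z => by
    exact (Real.norm_eq_abs _).trans_le (hfbound z : |flin z| ≤ C * ‖z‖))
  refine ⟨(InnerProductSpace.toDual ℝ H).symm fc, φ, hφ, fun z => ?_⟩
  have : ⟪(InnerProductSpace.toDual ℝ H).symm fc, z⟫ = fc z := by
    simp [InnerProductSpace.toDual_symm_apply]
  rw [this]
  exact hf z

set_option maxHeartbeats 1000000 in
theorem stmt11 {H : Type*} [NormedAddCommGroup H] [InnerProductSpace ℝ H] [CompleteSpace H]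
    (A B : H → Set H) (hA : MaxMonotoneOp A) (hB : MaxMonotoneOp B)
    (γ β : ℝ) (hγ : 0 < γ) (hβ : β ∈ Set.Ioo (0 : ℝ) 1)
    (lam : ℕ → ℝ) (hlam : ∀ n, lam n ∈ Set.Icc (0 : ℝ) 1)
    (hlamsum : ¬ Summable (fun n => lam n * (1 - lam n)))
    (q : H) (hq : q ∈ ranIdAdd (fun x => (γ / (2 * (1 - β))) • (A x + B x)))
    -- `JA = J_{γA₋q}` and `JB = J_{γB₋q}`: the (single-valued) resolvents of the
    -- inner (−q)-perturbations of `γA` and `γB`; `JγA = J_{γA}`.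
    (JA JB JγA : H → H)
    (hJA : ∀ s : H, s - JA s ∈ γ • A (JA s + q))
    (hJB : ∀ s : H, s - JB s ∈ γ • B (JB s + q))
    (hJγA : ∀ s : H, s - JγA s ∈ γ • A (JγA s))
    (x : ℕ → H)
    (hx : ∀ n, x (n + 1) = (1 - lam n) • x n +
        lam n • ((2 * β) • JB ((2 * β) • JA (x n) - x n) - ((2 * β) • JA (x n) - x n))) :
    ∃ xs p : H,
      -- `xs` is a fixed point of `(2βJ_{γB₋q} − Id) ∘ (2βJ_{γA₋q} − Id)`
      ((2 * β) • JB ((2 * β) • JA xs - xs) - ((2 * β) • JA xs - xs) = xs) ∧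
      -- `(x n)` converges weakly to `xs`
      (∀ z : H, Tendsto (fun n => ⟪x n, z⟫) atTop (nhds ⟪xs, z⟫)) ∧
      -- `p = J_{(γ/(2(1−β)))(A+B)}(q)`
      q - p ∈ (γ / (2 * (1 - β))) • (A p + B p) ∧
      JγA (q + xs) = p := by
  obtain ⟨hβ0, hβ1⟩ := hβ
  have hb1 : (0:ℝ) < 1 - β := by linarith
  have hb2 : (2 * (1 - β) : ℝ) ≠ 0 := by positivity
  have hγ' : γ ≠ 0 := hγ.ne'
  set T : H → H := fun s => (2 * β) • JB ((2 * β) • JA s - s) - ((2 * β) • JA s - s) with hT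
  have hxT : ∀ n, x (n + 1) = (1 - lam n) • x n + lam n • T (x n) := hx
  -- nonexpansiveness of T
  have hfA := resolvent_firm hA.1 hγ hJA
  have hfB := resolvent_firm hB.1 hγ hJB
  have hSA := refl_nonexp hβ0 hβ1.le hfA
  have hSB := refl_nonexp hβ0 hβ1.le hfB
  have hTne : ∀ s t : H, ‖T s - T t‖ ≤ ‖s - t‖ := fun s t =>
    le_trans (hSB _ _) (hSA s t)
  -- construct a fixed point f of T from hq
  obtain ⟨p0, u, hu, hqe⟩ := hq
  obtain ⟨v, hv, hve⟩ := Set.mem_smul_set.mp hu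
  obtain ⟨a, ha, b, hb, hve2⟩ := Set.mem_add.mp hv
  set f : H := (p0 - q) + γ • a with hf
  have hqp : q - p0 = (γ / (2 * (1 - β))) • (a + b) := by
    rw [hqe, ← hve, ← hve2]; abel
  have hkey : (2 * β - 2) • (p0 - q) = γ • a + γ • b := by
    have h2c : (2 * β - 2) • (p0 - q) = (2 - 2 * β) • (q - p0) := by module
    have hscal : (2 - 2 * β) * (γ / (2 * (1 - β))) = γ := by field_simp
    rw [h2c, hqp, smul_smul, hscal, smul_add]
  have h1 : f - (p0 - q) ∈ γ • A ((p0 - q) + q) := by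
    have he1 : f - (p0 - q) = γ • a := by rw [hf]; abel
    have he2 : (p0 - q) + q = p0 := by abel
    rw [he1, he2]; exact Set.smul_mem_smul_set ha
  have hJAf : JA f = p0 - q := resolvent_unique hA.1 hγ (hJA f) h1
  have h2 : ((2 * β) • JA f - f) - (p0 - q) ∈ γ • B ((p0 - q) + q) := by
    have he1 : ((2 * β) • JA f - f) - (p0 - q) = γ • b := by
      rw [hJAf, hf]
      have : (2 * β) • (p0 - q) - ((p0 - q) + γ • a) - (p0 - q)
          = ((2 * β - 2) • (p0 - q)) - γ • a := by module
      rw [this, hkey]; abel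
    have he2 : (p0 - q) + q = p0 := by abel
    rw [he1, he2]; exact Set.smul_mem_smul_set hb
  have hJBf : JB ((2 * β) • JA f - f) = p0 - q := resolvent_unique hB.1 hγ (hJB _) h2
  have hTf : T f = f := by
    show (2 * β) • JB ((2 * β) • JA f - f) - ((2 * β) • JA f - f) = f
    rw [hJBf, hJAf]; abel
  -- Fejer monotonicity
  have hkm : ∀ g : H, T g = g → ∀ n, ‖x (n + 1) - g‖ ^ 2
      ≤ ‖x n - g‖ ^ 2 - lam n * (1 - lam n) * ‖x n - T (x n)‖ ^ 2 := by
    intro g hg n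
    have hveq : x (n + 1) - g = (1 - lam n) • (x n - g) + lam n • (T (x n) - g) := by
      rw [hxT n]; module
    rw [hveq, norm_combo]
    have hTb : ‖T (x n) - g‖ ≤ ‖x n - g‖ := by
      have := hTne (x n) g; rwa [hg] at this
    have hab : (x n - g) - (T (x n) - g) = x n - T (x n) := by abel
    rw [hab]
    have hl0 := (hlam n).1
    have hl1 := (hlam n).2
    have hsq : ‖T (x n) - g‖ ^ 2 ≤ ‖x n - g‖ ^ 2 := by
      nlinarith [norm_nonneg (T (x n) - g), norm_nonneg (x n - g)]
    nlinarith [mul_le_mul_of_nonneg_left hsq hl0]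
  have hdist_anti : ∀ g : H, T g = g → Antitone (fun n => ‖x n - g‖ ^ 2) := by
    intro g hg
    refine antitone_nat_of_succ_le fun n => ?_
    have h1 := hkm g hg n
    have h2 : 0 ≤ lam n * (1 - lam n) * ‖x n - T (x n)‖ ^ 2 :=
      mul_nonneg (mul_nonneg (hlam n).1 (by linarith [(hlam n).2])) (sq_nonneg _)
    show ‖x (n + 1) - g‖ ^ 2 ≤ ‖x n - g‖ ^ 2
    linarith
  -- boundedness
  set C : ℝ := ‖x 0 - f‖ + ‖f‖ with hC
  have hbd : ∀ n, ‖x n‖ ≤ C := by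
    intro n
    have h1 : ‖x n - f‖ ^ 2 ≤ ‖x 0 - f‖ ^ 2 := hdist_anti f hTf (Nat.zero_le n)
    have h2 : ‖x n - f‖ ≤ ‖x 0 - f‖ :=
      le_of_sq_le_sq' (norm_nonneg _) (norm_nonneg _) h1
    calc ‖x n‖ = ‖(x n - f) + f‖ := by rw [sub_add_cancel]
      _ ≤ ‖x n - f‖ + ‖f‖ := norm_add_le _ _
      _ ≤ C := by rw [hC]; linarith
  -- residual is antitone
  have hmono_e : ∀ n, ‖x (n + 1) - T (x (n + 1))‖ ≤ ‖x n - T (x n)‖ := by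
    intro n
    have hl0 := (hlam n).1
    have hl1 := (hlam n).2
    have hid : x (n + 1) - T (x (n + 1))
        = (1 - lam n) • (x n - T (x n)) + (T (x n) - T (x (n + 1))) := by
      rw [hxT n]; module
    have hstep : x n - x (n + 1) = lam n • (x n - T (x n)) := by rw [hxT n]; module
    calc ‖x (n + 1) - T (x (n + 1))‖
        ≤ ‖(1 - lam n) • (x n - T (x n))‖ + ‖T (x n) - T (x (n + 1))‖ := by
          rw [hid]; exact norm_add_le _ _
      _ ≤ (1 - lam n) * ‖x n - T (x n)‖ + ‖x n - x (n + 1)‖ := by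
          refine add_le_add ?_ (hTne _ _)
          rw [norm_smul, Real.norm_eq_abs, abs_of_nonneg (by linarith)]
      _ = (1 - lam n) * ‖x n - T (x n)‖ + lam n * ‖x n - T (x n)‖ := by
          rw [hstep, norm_smul, Real.norm_eq_abs, abs_of_nonneg hl0]
      _ = ‖x n - T (x n)‖ := by ring
  have hanti_e : Antitone (fun n => ‖x n - T (x n)‖) := antitone_nat_of_succ_le hmono_e
  -- summability bound
  have hsum : ∀ n, ∑ i ∈ Finset.range n, lam i * (1 - lam i) * ‖x i - T (x i)‖ ^ 2
      ≤ ‖x 0 - f‖ ^ 2 := by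
    have htel : ∀ n, ∑ i ∈ Finset.range n, lam i * (1 - lam i) * ‖x i - T (x i)‖ ^ 2
        ≤ ‖x 0 - f‖ ^ 2 - ‖x n - f‖ ^ 2 := by
      intro n
      induction n with
      | zero => simp
      | succ m ih =>
        rw [Finset.sum_range_succ]
        have := hkm f hTf m
        linarith
    intro n
    have := htel n
    nlinarith [sq_nonneg ‖x n - f‖]
  -- asymptotic regularity
  have he0 : Tendsto (fun n => ‖x n - T (x n)‖) atTop (nhds 0) := by
    have hinf : ∀ ε : ℝ, 0 < ε → ∃ N, ‖x N - T (x N)‖ < ε := by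
      intro ε hε
      by_contra hcon
      push_neg at hcon
      apply hlamsum
      have hnn : ∀ n, 0 ≤ lam n * (1 - lam n) :=
        fun n => mul_nonneg (hlam n).1 (by linarith [(hlam n).2])
      have hsummable : Summable (fun n => lam n * (1 - lam n) * ‖x n - T (x n)‖ ^ 2) :=
        summable_of_sum_range_le (fun n => mul_nonneg (hnn n) (sq_nonneg _)) hsum
      refine Summable.of_nonneg_of_le hnn (fun n => ?_)
        ((hsummable.div_const (ε ^ 2)))
      rw [le_div_iff₀ (by positivity)]
      have h1 : ε ^ 2 ≤ ‖x n - T (x n)‖ ^ 2 := by nlinarith [hcon n, hε.le]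
      nlinarith [mul_le_mul_of_nonneg_left h1 (hnn n)]
    rw [Metric.tendsto_atTop]
    intro ε hε
    obtain ⟨N, hN⟩ := hinf ε hε
    refine ⟨N, fun n hn => ?_⟩
    have h1 : ‖x n - T (x n)‖ ≤ ‖x N - T (x N)‖ := hanti_e hn
    rw [Real.dist_eq, sub_zero, abs_of_nonneg (norm_nonneg _)]
    linarith
  -- convergence of distances to fixed points
  have hlimd : ∀ g : H, T g = g → ∃ ℓ : ℝ, Tendsto (fun n => ‖x n - g‖ ^ 2) atTop (nhds ℓ) := by
    intro g hg
    refine ⟨_, tendsto_atTop_ciInf (hdist_anti g hg) ⟨0, ?_⟩⟩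
    rintro _ ⟨n, rfl⟩; positivity
  -- demiclosedness
  have hdemi : ∀ (ψ : ℕ → ℕ) (w : H), Tendsto ψ atTop atTop →
      (∀ z : H, Tendsto (fun k => ⟪x (ψ k), z⟫) atTop (nhds ⟪w, z⟫)) → T w = w := by
    intro ψ w hψ hw
    have hb3 : ∀ k, ‖x (ψ k) - w‖ ≤ C + ‖w‖ := fun k =>
      le_trans (norm_sub_le _ _) (by linarith [hbd (ψ k)])
    have heψ : Tendsto (fun k => ‖x (ψ k) - T (x (ψ k))‖) atTop (nhds 0) := he0.comp hψ
    have hineq : ∀ k, ‖w - T w‖ ^ 2 ≤ ‖x (ψ k) - T (x (ψ k))‖ ^ 2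
        + 2 * (C + ‖w‖) * ‖x (ψ k) - T (x (ψ k))‖ - 2 * ⟪x (ψ k) - w, w - T w⟫ := by
      intro k
      have h1 : ‖x (ψ k) - T w‖ ^ 2
          = ‖x (ψ k) - w‖ ^ 2 + 2 * ⟪x (ψ k) - w, w - T w⟫ + ‖w - T w‖ ^ 2 := by
        have hs : x (ψ k) - T w = (x (ψ k) - w) + (w - T w) := by abel
        rw [hs, norm_add_sq_real]
      have h2 : ‖x (ψ k) - T w‖ ≤ ‖x (ψ k) - T (x (ψ k))‖ + ‖x (ψ k) - w‖ := by
        have hs : x (ψ k) - T w = (x (ψ k) - T (x (ψ k))) + (T (x (ψ k)) - T w) := by abel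
        calc ‖x (ψ k) - T w‖ ≤ ‖x (ψ k) - T (x (ψ k))‖ + ‖T (x (ψ k)) - T w‖ := by
              rw [hs]; exact norm_add_le _ _
          _ ≤ _ := add_le_add le_rfl (hTne _ _)
      have h3 : ‖x (ψ k) - T w‖ ^ 2
          ≤ (‖x (ψ k) - T (x (ψ k))‖ + ‖x (ψ k) - w‖) ^ 2 := by
        nlinarith [norm_nonneg (x (ψ k) - T w), norm_nonneg (x (ψ k) - T (x (ψ k))),
          norm_nonneg (x (ψ k) - w)]
      nlinarith [hb3 k, norm_nonneg (x (ψ k) - T (x (ψ k))), norm_nonneg (x (ψ k) - w)]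
    have t1 : Tendsto (fun k => ‖x (ψ k) - T (x (ψ k))‖ ^ 2) atTop (nhds 0) := by
      have := heψ.pow 2
      simpa using this
    have t2 : Tendsto (fun k => 2 * (C + ‖w‖) * ‖x (ψ k) - T (x (ψ k))‖) atTop (nhds 0) := by
      have := heψ.const_mul (2 * (C + ‖w‖))
      simpa using this
    have t3 : Tendsto (fun k => ⟪x (ψ k) - w, w - T w⟫) atTop (nhds 0) := by
      have h := (hw (w - T w)).sub (tendsto_const_nhds (x := ⟪w, w - T w⟫))
      simp only [sub_self] at h
      have : (fun k => ⟪x (ψ k), w - T w⟫ - ⟪w, w - T w⟫)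
          = fun k => ⟪x (ψ k) - w, w - T w⟫ := by
        funext k; rw [inner_sub_left]
      rwa [this] at h
    have hrhs : Tendsto (fun k => ‖x (ψ k) - T (x (ψ k))‖ ^ 2
        + 2 * (C + ‖w‖) * ‖x (ψ k) - T (x (ψ k))‖ - 2 * ⟪x (ψ k) - w, w - T w⟫)
        atTop (nhds 0) := by
      have := (t1.add t2).sub (t3.const_mul 2)
      simpa using this
    have hle : ‖w - T w‖ ^ 2 ≤ 0 :=
      le_of_tendsto_of_tendsto' tendsto_const_nhds hrhs hineq
    have hz : ‖w - T w‖ = 0 := by nlinarith [norm_nonneg (w - T w)]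
    exact (sub_eq_zero.mp (norm_eq_zero.mp hz)).symm
  -- weak subsequential limit
  obtain ⟨w, φ, hφ, hwφ⟩ := weak_seq_compact x C hbd
  have hTw : T w = w := hdemi φ w hφ.tendsto_atTop hwφ
  -- uniqueness of weak subsequential limits among fixed points
  have huniq : ∀ (ψ1 ψ2 : ℕ → ℕ) (w1 w2 : H), Tendsto ψ1 atTop atTop →
      Tendsto ψ2 atTop atTop →
      (∀ z : H, Tendsto (fun k => ⟪x (ψ1 k), z⟫) atTop (nhds ⟪w1, z⟫)) →
      (∀ z : H, Tendsto (fun k => ⟪x (ψ2 k), z⟫) atTop (nhds ⟪w2, z⟫)) →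
      T w1 = w1 → T w2 = w2 → w1 = w2 := by
    intro ψ1 ψ2 w1 w2 hψ1 hψ2 hw1 hw2 hT1 hT2
    obtain ⟨ℓ1, hℓ1⟩ := hlimd w1 hT1
    obtain ⟨ℓ2, hℓ2⟩ := hlimd w2 hT2
    have hinner : Tendsto (fun n => ⟪x n, w1 - w2⟫) atTop
        (nhds ((ℓ2 - ℓ1 - ‖w2‖ ^ 2 + ‖w1‖ ^ 2) / 2)) := by
      have hcalc : ∀ n : ℕ, ⟪x n, w1 - w2⟫
          = (‖x n - w2‖ ^ 2 - ‖x n - w1‖ ^ 2 - ‖w2‖ ^ 2 + ‖w1‖ ^ 2) / 2 := by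
        intro n
        rw [inner_sub_right, norm_sub_sq_real, norm_sub_sq_real]
        ring
      simp only [hcalc]
      exact (((hℓ2.sub hℓ1).sub_const (‖w2‖ ^ 2)).add_const (‖w1‖ ^ 2)).div_const 2
    have e1 : ⟪w1, w1 - w2⟫ = (ℓ2 - ℓ1 - ‖w2‖ ^ 2 + ‖w1‖ ^ 2) / 2 :=
      tendsto_nhds_unique (hw1 (w1 - w2)) (hinner.comp hψ1)
    have e2 : ⟪w2, w1 - w2⟫ = (ℓ2 - ℓ1 - ‖w2‖ ^ 2 + ‖w1‖ ^ 2) / 2 :=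
      tendsto_nhds_unique (hw2 (w1 - w2)) (hinner.comp hψ2)
    have hz : ⟪w1 - w2, w1 - w2⟫ = (0:ℝ) := by
      rw [inner_sub_left]; linarith
    exact sub_eq_zero.mp (inner_self_eq_zero.mp hz)
  -- full weak convergence
  have hweak : ∀ z : H, Tendsto (fun n => ⟪x n, z⟫) atTop (nhds ⟪w, z⟫) := by
    intro z
    apply Filter.tendsto_of_subseq_tendsto
    intro ns hns
    obtain ⟨w2, φ2, hφ2, hw2⟩ := weak_seq_compact (fun k => x (ns k)) C (fun k => hbd (ns k))
    have hcomp : Tendsto (fun k => ns (φ2 k)) atTop atTop := hns.comp hφ2.tendsto_atTop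
    have hT2 : T w2 = w2 := hdemi (fun k => ns (φ2 k)) w2 hcomp hw2
    have hww : w2 = w := huniq (fun k => ns (φ2 k)) φ w2 w hcomp hφ.tendsto_atTop hw2 hwφ hT2 hTw
    exact ⟨φ2, by rw [← hww]; exact hw2 z⟩
  -- extract p from the fixed point w
  obtain ⟨a', ha', haw⟩ := Set.mem_smul_set.mp (hJA w)
  have h2b : (2 * β) • JB ((2 * β) • JA w - w) = (2 * β) • JA w := by
    have h := hTw
    rw [hT] at h
    simp only [] at h
    have h' : (2 * β) • JB ((2 * β) • JA w - w) - ((2 * β) • JA w - w) = w := h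
    have := sub_eq_iff_eq_add.mp h'
    rw [this]; abel
  have hJBy : JB ((2 * β) • JA w - w) = JA w :=
    smul_right_injective H (by positivity : (2 * β : ℝ) ≠ 0) h2b
  have hmemB : ((2 * β) • JA w - w) - JA w ∈ γ • B (JA w + q) := by
    have := hJB ((2 * β) • JA w - w)
    rwa [hJBy] at this
  obtain ⟨b', hb', hbw⟩ := Set.mem_smul_set.mp hmemB
  refine ⟨w, JA w + q, hTw, hweak, ?_, ?_⟩
  · -- q - (JA w + q) ∈ (γ / (2 * (1 - β))) • (A (JA w + q) + B (JA w + q))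
    have hab' : γ • (a' + b') = (2 * β - 2) • JA w := by
      rw [smul_add, haw, hbw]; module
    have hsum' : (γ / (2 * (1 - β))) • (a' + b') = -(JA w) := by
      have h9 : (γ / (2 * (1 - β))) • (a' + b')
          = ((γ / (2 * (1 - β))) * γ⁻¹) • (γ • (a' + b')) := by
        rw [smul_smul]; congr 1; field_simp
      rw [h9, hab', smul_smul,
        show (γ / (2 * (1 - β))) * γ⁻¹ * (2 * β - 2) = -1 by field_simp; ring,
        neg_one_smul]
    have hmem : a' + b' ∈ A (JA w + q) + B (JA w + q) := Set.add_mem_add ha' hb'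
    have hmem2 := Set.smul_mem_smul_set (a := γ / (2 * (1 - β))) hmem
    rw [hsum'] at hmem2
    have hqq : q - (JA w + q) = -(JA w) := by abel
    rwa [hqq]
  · -- JγA (q + w) = JA w + q
    have hu0 : (q + w) - JγA (q + w) ∈ γ • A (JγA (q + w) + 0) := by
      rw [add_zero]; exact hJγA _
    have hv0 : (q + w) - (JA w + q) ∈ γ • A ((JA w + q) + 0) := by
      rw [add_zero]
      have he' : (q + w) - (JA w + q) = w - JA w := by abel
      rw [he', ← haw]
      exact Set.smul_mem_smul_set ha'
    exact resolvent_unique hA.1 hγ hu0 hv0
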